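/- Let C > 0, T > 0 and let x : [0, T] → ℝ be twice continuously differentiable with x(0) = 0 and |x''(t)| ≤ C·(x(t)² + |x'(t)|) for all t ∈ [0, T]. Then for every t ∈ [0, T], |x'(t) − x'(0)| ≤ C · ∫₀ᵗ ( (t²/2)·x'(s)² + |x'(s)| ) ds. -/

import Mathlib

open intervalIntegral MeasureTheory Set

-- interval Cauchy–Schwarz
lemma aux_cs {f : ℝ → ℝ} {s : ℝ} (hs : 0 ≤ s) (hf : ContinuousOn f (Set.Icc 0 s)) :
    (∫ w in (0:ℝ)..s, f w) ^ 2 ≤ s * ∫ w in (0:ℝ)..s, (f w) ^ 2 := by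
  rcases eq_or_lt_of_le hs with rfl | hs'
  · simp
  have huI : Set.uIcc (0:ℝ) s = Set.Icc 0 s := Set.uIcc_of_le hs
  have hif : IntervalIntegrable f volume 0 s := by
    apply ContinuousOn.intervalIntegrable; rwa [huI]
  have hif2 : IntervalIntegrable (fun w => (f w) ^ 2) volume 0 s := by
    apply ContinuousOn.intervalIntegrable; rw [huI]; exact hf.pow 2
  set I := ∫ w in (0:ℝ)..s, f w with hI
  set J := ∫ w in (0:ℝ)..s, (f w) ^ 2 with hJ
  set l := I / s with hl
  have h0 : 0 ≤ ∫ w in (0:ℝ)..s, (f w - l) ^ 2 :=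
    intervalIntegral.integral_nonneg hs (fun w _ => sq_nonneg _)
  have hexp : (∫ w in (0:ℝ)..s, (f w - l) ^ 2) = J - 2 * l * I + l ^ 2 * s := by
    have : ∀ w, (f w - l) ^ 2 = (f w) ^ 2 - (2 * l) * f w + l ^ 2 := by intro w; ring
    simp_rw [this]
    rw [intervalIntegral.integral_add (((hif2).sub (hif.const_mul (2*l)))) intervalIntegrable_const,
      intervalIntegral.integral_sub hif2 (hif.const_mul (2*l)),
      intervalIntegral.integral_const_mul, intervalIntegral.integral_const]
    simp only [smul_eq_mul, ← hI, ← hJ]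
    ring
  rw [hexp, hl] at h0
  have hs0 : s ≠ 0 := ne_of_gt hs'
  field_simp at h0
  nlinarith [h0, mul_pos hs' hs']

-- FTC helper
lemma aux_ftc {f f' : ℝ → ℝ} {T u : ℝ}
    (hd : ∀ t ∈ Set.Icc (0 : ℝ) T, HasDerivWithinAt f (f' t) (Set.Icc (0 : ℝ) T) t)
    (hc : ContinuousOn f' (Set.Icc (0 : ℝ) T)) (hu : u ∈ Set.Icc (0:ℝ) T) :
    ∫ y in (0:ℝ)..u, f' y = f u - f 0 := by
  obtain ⟨hu0, huT⟩ := hu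
  have hsub : Set.Icc (0:ℝ) u ⊆ Set.Icc (0:ℝ) T := Set.Icc_subset_Icc le_rfl huT
  apply intervalIntegral.integral_eq_sub_of_hasDeriv_right_of_le hu0
  · exact fun s hs => ((hd s (hsub hs)).continuousWithinAt).mono hsub
  · intro s hs
    have hsT : s ∈ Set.Ioo (0:ℝ) T := ⟨hs.1, lt_of_lt_of_le hs.2 huT⟩
    exact ((hd s ⟨le_of_lt hsT.1, le_of_lt hsT.2⟩).hasDerivAt
      (Icc_mem_nhds hsT.1 hsT.2)).hasDerivWithinAt
  · apply ContinuousOn.intervalIntegrable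
    rw [Set.uIcc_of_le hu0]; exact hc.mono hsub

theorem stmt1 (C T : ℝ) (hC : 0 < C) (hT : 0 < T) (x x' x'' : ℝ → ℝ)
    (hx' : ∀ t ∈ Set.Icc (0 : ℝ) T, HasDerivWithinAt x (x' t) (Set.Icc (0 : ℝ) T) t)
    (hx'' : ∀ t ∈ Set.Icc (0 : ℝ) T, HasDerivWithinAt x' (x'' t) (Set.Icc (0 : ℝ) T) t)
    (hcont : ContinuousOn x'' (Set.Icc (0 : ℝ) T))
    (hx0 : x 0 = 0)
    (hineq : ∀ t ∈ Set.Icc (0 : ℝ) T, |x'' t| ≤ C * ((x t) ^ 2 + |x' t|)) :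
    ∀ t ∈ Set.Icc (0 : ℝ) T,
      |x' t - x' 0| ≤ C * ∫ s in (0 : ℝ)..t, (t ^ 2 / 2 * (x' s) ^ 2 + |x' s|) := by
  intro t ht
  obtain ⟨ht0, htT⟩ := ht
  have hsub : Set.Icc (0:ℝ) t ⊆ Set.Icc (0:ℝ) T := Set.Icc_subset_Icc le_rfl htT
  have hcx' : ContinuousOn x' (Set.Icc (0:ℝ) T) := fun s hs => (hx'' s hs).continuousWithinAt
  have hcx : ContinuousOn x (Set.Icc (0:ℝ) T) := fun s hs => (hx' s hs).continuousWithinAt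
  -- interval integrability on [0,u] for u ≤ T of continuous functions
  have hint : ∀ (g : ℝ → ℝ), ContinuousOn g (Set.Icc (0:ℝ) T) → ∀ u ∈ Set.Icc (0:ℝ) T,
      IntervalIntegrable g volume 0 u := by
    intro g hg u hu
    apply ContinuousOn.intervalIntegrable
    rw [Set.uIcc_of_le hu.1]
    exact hg.mono (Set.Icc_subset_Icc le_rfl hu.2)
  -- step 1: x' t - x' 0 = ∫ x''
  have h1 : x' t - x' 0 = ∫ s in (0:ℝ)..t, x'' s := (aux_ftc hx'' hcont ⟨ht0, htT⟩).symm
  -- bound pointwise x s ^ 2 ≤ s * K where K = ∫ t, x'^2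
  set K := ∫ w in (0:ℝ)..t, (x' w) ^ 2 with hK
  have hK0 : 0 ≤ K := intervalIntegral.integral_nonneg ht0 (fun w _ => sq_nonneg _)
  have hxb : ∀ s ∈ Set.Icc (0:ℝ) t, (x s) ^ 2 ≤ s * K := by
    intro s hs
    have hsT : s ∈ Set.Icc (0:ℝ) T := hsub hs
    have hxs : x s = ∫ w in (0:ℝ)..s, x' w := by
      have := aux_ftc hx' (fun u hu => (hx'' u hu).continuousWithinAt) hsT
      rw [this, hx0]; ring
    have hcs : (x s) ^ 2 ≤ s * ∫ w in (0:ℝ)..s, (x' w) ^ 2 := by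
      rw [hxs]
      exact aux_cs hs.1 (hcx'.mono (Set.Icc_subset_Icc le_rfl hsT.2))
    have hmono : (∫ w in (0:ℝ)..s, (x' w) ^ 2) ≤ K := by
      rw [hK, ← intervalIntegral.integral_add_adjacent_intervals
        (hint (fun w => (x' w) ^ 2) (hcx'.pow 2) s hsT)
        (((hcx'.pow 2).mono (Set.Icc_subset_Icc hs.1 htT)).intervalIntegrable_of_Icc hs.2)]
      have : 0 ≤ ∫ w in s..t, (x' w) ^ 2 :=
        intervalIntegral.integral_nonneg hs.2 (fun w _ => sq_nonneg _)
      linarith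
    calc (x s)^2 ≤ s * ∫ w in (0:ℝ)..s, (x' w)^2 := hcs
      _ ≤ s * K := by apply mul_le_mul_of_nonneg_left hmono hs.1
  -- integrability pieces on [0,t]
  have hi_abs'' : IntervalIntegrable (fun s => |x'' s|) volume 0 t :=
    hint _ hcont.abs t ⟨ht0, htT⟩
  have hi_rhs : IntervalIntegrable (fun s => C * ((x s)^2 + |x' s|)) volume 0 t :=
    hint _ (continuousOn_const.mul ((hcx.pow 2).add hcx'.abs)) t ⟨ht0, htT⟩
  have hi_x2 : IntervalIntegrable (fun s => (x s)^2) volume 0 t :=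
    hint _ (hcx.pow 2) t ⟨ht0, htT⟩
  have hi_ax' : IntervalIntegrable (fun s => |x' s|) volume 0 t :=
    hint _ hcx'.abs t ⟨ht0, htT⟩
  have hi_x'2 : IntervalIntegrable (fun s => (x' s)^2) volume 0 t :=
    hint _ (hcx'.pow 2) t ⟨ht0, htT⟩
  -- main chain
  rw [h1]
  calc |∫ s in (0:ℝ)..t, x'' s| ≤ ∫ s in (0:ℝ)..t, |x'' s| :=
        intervalIntegral.abs_integral_le_integral_abs ht0
    _ ≤ ∫ s in (0:ℝ)..t, C * ((x s)^2 + |x' s|) := by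
        apply intervalIntegral.integral_mono_on ht0 hi_abs'' hi_rhs
        intro s hs; exact hineq s (hsub hs)
    _ = C * ((∫ s in (0:ℝ)..t, (x s)^2) + ∫ s in (0:ℝ)..t, |x' s|) := by
        rw [intervalIntegral.integral_const_mul, intervalIntegral.integral_add hi_x2 hi_ax']
    _ ≤ C * ((t^2/2 * K) + ∫ s in (0:ℝ)..t, |x' s|) := by
        apply mul_le_mul_of_nonneg_left _ (le_of_lt hC)
        apply add_le_add_left
        calc (∫ s in (0:ℝ)..t, (x s)^2) ≤ ∫ s in (0:ℝ)..t, s * K := by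
              apply intervalIntegral.integral_mono_on ht0 hi_x2
                ((continuous_id.mul continuous_const).intervalIntegrable 0 t) hxb
          _ = t^2/2 * K := by
              rw [intervalIntegral.integral_mul_const, integral_id]; ring
    _ = C * ∫ s in (0:ℝ)..t, (t ^ 2 / 2 * (x' s) ^ 2 + |x' s|) := by
        rw [intervalIntegral.integral_add (hi_x'2.const_mul _) hi_ax',
          intervalIntegral.integral_const_mul]
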